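/- If ψ_n · ψ_{N-1-n} ≠ 1 for all n ∈ {0, ..., N/2 - 1}, then the inverse C^{-1} of C = I_N + J_N Ψ is sparse: its (i,j) entry is zero whenever j ∉ {i, N-1-i}; moreover C^{-1}(i,i) = 1/(1 - ψ_i ψ_{N-1-i}) and C^{-1}(i, N-1-i) = -ψ_{N-1-i}/(1 - ψ_i ψ_{N-1-i}). -/

import Mathlib

open Matrix

/-- The `N × N` exchange (counter-identity) matrix: `(J_N)_{ij} = 1` if `i + j = N - 1`,
and `0` otherwise. -/
noncomputable def exchMat (N : ℕ) : Matrix (Fin N) (Fin N) ℝ :=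
  Matrix.of fun i j => if (i : ℕ) + (j : ℕ) = N - 1 then (1 : ℝ) else 0

/-- If `ψ_n · ψ_{N-1-n} ≠ 1` for all `n ∈ {0, …, N/2 - 1}`, then `C⁻¹` is sparse:
its `(i,j)` entry vanishes whenever `j ∉ {i, N-1-i}`, while
`C⁻¹(i,i) = 1/(1 - ψ_i ψ_{N-1-i})` and `C⁻¹(i, N-1-i) = -ψ_{N-1-i}/(1 - ψ_i ψ_{N-1-i})`. -/
theorem stmt5 (N : ℕ) (hN : 0 < N) (hNe : Even N) (ψ : Fin N → ℝ)
    (hψ : ∀ n : Fin N, (n : ℕ) < N / 2 → ψ n * ψ n.rev ≠ 1) :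
    (∀ i j : Fin N, j ≠ i → j ≠ i.rev →
      ((1 : Matrix (Fin N) (Fin N) ℝ) + exchMat N * Matrix.diagonal ψ)⁻¹ i j = 0) ∧
    (∀ i : Fin N,
      ((1 : Matrix (Fin N) (Fin N) ℝ) + exchMat N * Matrix.diagonal ψ)⁻¹ i i =
        1 / (1 - ψ i * ψ i.rev)) ∧
    (∀ i : Fin N,
      ((1 : Matrix (Fin N) (Fin N) ℝ) + exchMat N * Matrix.diagonal ψ)⁻¹ i i.rev =
        -ψ i.rev / (1 - ψ i * ψ i.rev)) := by
  obtain ⟨m, hm⟩ := hNe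
  have hrevrev : ∀ i : Fin N, i.rev.rev = i := fun i => Fin.rev_rev i
  have hvrev : ∀ i : Fin N, (i.rev : ℕ) = N - 1 - i := fun i => by
    rw [Fin.val_rev]; omega
  have hne : ∀ i : Fin N, i.rev ≠ i := by
    intro i h
    have h1 : (i.rev : ℕ) = i := by rw [h]
    rw [hvrev] at h1
    have := i.isLt
    omega
  have hd : ∀ i : Fin N, 1 - ψ i * ψ i.rev ≠ 0 := by
    intro i
    rcases lt_or_ge (i : ℕ) (N / 2) with h | h
    · exact sub_ne_zero.mpr (Ne.symm (hψ i h))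
    · have h2 : (i.rev : ℕ) < N / 2 := by
        have := i.isLt
        rw [hvrev]
        omega
      have := hψ i.rev h2
      rw [hrevrev, mul_comm] at this
      exact sub_ne_zero.mpr (Ne.symm this)
  set C := (1 : Matrix (Fin N) (Fin N) ℝ) + exchMat N * Matrix.diagonal ψ with hC
  set B : Matrix (Fin N) (Fin N) ℝ := Matrix.of (fun i j =>
    if j = i then 1 / (1 - ψ i * ψ i.rev)
    else if j = i.rev then -ψ i.rev / (1 - ψ i * ψ i.rev) else 0) with hB
  have hCk : ∀ i k : Fin N,
      C i k = (if k = i then 1 else 0) + (if k = i.rev then ψ k else 0) := by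
    intro i k
    simp only [hC, Matrix.add_apply, Matrix.one_apply, Matrix.mul_diagonal, exchMat,
      Matrix.of_apply]
    have hiff : ((i : ℕ) + (k : ℕ) = N - 1) ↔ k = i.rev := by
      rw [Fin.ext_iff, hvrev]
      have := i.isLt; have := k.isLt
      omega
    congr 1
    · simp [eq_comm]
    · by_cases h : k = i.rev
      · rw [if_pos h, if_pos (hiff.mpr h), one_mul]
      · rw [if_neg h, if_neg (fun hh => h (hiff.mp hh)), zero_mul]
  have hCB : C * B = 1 := by
    ext i j
    rw [Matrix.mul_apply]
    have hsum : ∀ k : Fin N, C i k * B k j =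
        (if k = i then B i j else 0) + (if k = i.rev then ψ i.rev * B i.rev j else 0) := by
      intro k
      rw [hCk]
      by_cases h1 : k = i
      · rw [h1, if_pos rfl, if_pos rfl, if_neg (fun h => hne i h.symm),
          if_neg (fun h => hne i h.symm)]
        ring
      · rw [if_neg h1, if_neg h1]
        by_cases h2 : k = i.rev
        · rw [h2, if_pos rfl, if_pos rfl]
          ring
        · rw [if_neg h2, if_neg h2]
          ring
    rw [Finset.sum_congr rfl (fun k _ => hsum k), Finset.sum_add_distrib,
      Finset.sum_ite_eq' Finset.univ i (fun _ => B i j),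
      Finset.sum_ite_eq' Finset.univ i.rev (fun _ => ψ i.rev * B i.rev j),
      if_pos (Finset.mem_univ i), if_pos (Finset.mem_univ i.rev)]
    have hdi := hd i
    have hdr : 1 - ψ i.rev * ψ i ≠ 0 := by rw [mul_comm]; exact hd i
    by_cases h1 : j = i
    · subst h1
      rw [Matrix.one_apply_eq]
      have hj : j ≠ j.rev := Ne.symm (hne j)
      simp only [hB, Matrix.of_apply, hrevrev, if_pos rfl, if_neg hj, ↓reduceIte]
      field_simp
      ring
    · by_cases h2 : j = i.rev
      · subst h2
        rw [Matrix.one_apply_ne (Ne.symm (hne i))]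
        simp only [hB, Matrix.of_apply, hrevrev, if_pos rfl, if_neg (hne i), ↓reduceIte]
        field_simp
        ring
      · rw [Matrix.one_apply_ne (fun h => h1 h.symm)]
        simp only [hB, Matrix.of_apply, if_neg h1, if_neg h2, hrevrev]
        ring
  have hinv : C⁻¹ = B := Matrix.inv_eq_right_inv hCB
  refine ⟨?_, ?_, ?_⟩
  · intro i j hji hjr
    rw [hinv]
    simp only [hB, Matrix.of_apply, if_neg hji, if_neg hjr]
  · intro i
    rw [hinv]
    simp [hB]
  · intro i
    rw [hinv]
    simp [hB, hne i]
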